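/- (Predecessor rule, Lemma 2 of the paper.) Assume that every u ∈ F admits a path from v0 to u, all of whose vertices lie in F, whose cost equals cost u. Let x ∉ F be a vertex all of whose in-neighbors are fixed, i.e., for every v with E v x one has v ∈ F. Then D x = cost x. -/

import Mathlib

open scoped ENNReal

variable {V : Type*}

/-- `IsPath E v0 x p` means `p` is a finite sequence of vertices starting at `v0`,
ending at `x`, with consecutive vertices joined by edges of `E`. -/
def IsPath (E : V → V → Prop) (v0 x : V) (p : List V) : Prop :=
  p.Chain' E ∧ p.head? = some v0 ∧ p.getLast? = some x

/-- The cost of a path: the sum of the weights of its consecutive edges. -/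
noncomputable def pathCost (w : V → V → ℝ≥0∞) (p : List V) : ℝ≥0∞ :=
  ((p.zip p.tail).map fun q => w q.1 q.2).sum

/-- `cost E w v0 x` : the infimum of the costs of all paths from `v0` to `x`
(`∞` if `x` is unreachable from `v0`). -/
noncomputable def cost (E : V → V → Prop) (w : V → V → ℝ≥0∞) (v0 x : V) : ℝ≥0∞ :=
  ⨅ p : {p : List V // IsPath E v0 x p}, pathCost w p.1

/-- An `F`-path from `v0` to `x` : a path all of whose vertices other than the
final vertex `x` lie in `F`. `Dfun E w v0 F x` is the infimum of the costs of
`F`-paths from `v0` to `x` (`∞` if no `F`-path to `x` exists). -/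
noncomputable def Dfun (E : V → V → Prop) (w : V → V → ℝ≥0∞) (v0 : V) (F : Set V)
    (x : V) : ℝ≥0∞ :=
  ⨅ p : {p : List V // IsPath E v0 x p ∧ ∀ v ∈ p.dropLast, v ∈ F}, pathCost w p.1

lemma pathCost_cons_cons (w : V → V → ℝ≥0∞) (a b : V) (l : List V) :
    pathCost w (a :: b :: l) = w a b + pathCost w (b :: l) := by
  simp [pathCost]

lemma pathCost_concat (w : V → V → ℝ≥0∞) (l : List V) (hl : l ≠ []) (b : V) :
    pathCost w (l ++ [b]) = pathCost w l + w (l.getLast hl) b := by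
  induction l with
  | nil => simp at hl
  | cons a t ih =>
    cases t with
    | nil => simp [pathCost]
    | cons c s =>
      simp only [List.cons_append] at ih ⊢
      rw [pathCost_cons_cons, pathCost_cons_cons, ih (by simp), ← add_assoc]
      congr 1

/-- Predecessor rule (Lemma 2): if every fixed vertex has a minimum-cost path lying
entirely inside `F`, and `x ∉ F` has all its in-neighbors in `F`, then `D x = cost x`. -/
theorem predecessor_rule [Fintype V] (E : V → V → Prop) (w : V → V → ℝ≥0∞)
    (hpos : ∀ u v, E u v → 0 < w u v) (hfin : ∀ u v, E u v → w u v < ⊤)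
    (v0 : V) (F : Set V) (hv0 : v0 ∈ F)
    (hF : ∀ u ∈ F, ∃ p : List V, IsPath E v0 u p ∧ (∀ v ∈ p, v ∈ F) ∧
      pathCost w p = cost E w v0 u)
    (x : V) (hx : x ∉ F) (hpred : ∀ v, E v x → v ∈ F) :
    Dfun E w v0 F x = cost E w v0 x := by
  refine le_antisymm (le_iInf ?_) (le_iInf fun p => iInf_le_of_le ⟨p.1, p.2.1⟩ le_rfl)
  rintro ⟨p, hchain, hhead, hlast⟩
  have hvx : v0 ≠ x := fun h => hx (h ▸ hv0)
  have hne : p ≠ [] := by rintro rfl; simp at hhead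
  have hgl : p.getLast hne = x := by
    rw [List.getLast?_eq_getLast hne] at hlast
    exact Option.some_injective _ hlast
  have hqne : p.dropLast ≠ [] := by
    intro h
    have hd := List.dropLast_concat_getLast hne
    rw [h, hgl, List.nil_append] at hd
    rw [← hd] at hhead
    simp at hhead
    exact hvx hhead.symm
  set q := p.dropLast with hq
  set v := q.getLast hqne with hv
  have hp_decomp : p = q ++ [x] := by
    conv_lhs => rw [← List.dropLast_concat_getLast hne]
    rw [hgl]
  rw [hp_decomp] at hchain; replace hchain := List.isChain_append.mp hchain
  obtain ⟨hcq, -, hrel⟩ := hchain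
  have hglq : q.getLast? = some v := List.getLast?_eq_getLast hqne
  have hEvx : E v x := hrel v hglq x rfl
  have hheadq : q.head? = some v0 := by
    rw [hp_decomp, List.head?_append] at hhead
    rcases hq' : q.head? with _ | a
    · rw [List.head?_eq_none_iff] at hq'; exact absurd hq' hqne
    · rw [hq'] at hhead; exact hhead
  have hpathq : IsPath E v0 v q := ⟨hcq, hheadq, hglq⟩
  obtain ⟨r, ⟨hcr, hheadr, hlastr⟩, hrF, hrc⟩ := hF v (hpred v hEvx)
  have hrne : r ≠ [] := by rintro rfl; simp at hheadr
  have hglr : r.getLast hrne = v := by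
    rw [List.getLast?_eq_getLast hrne] at hlastr
    exact Option.some_injective _ hlastr
  have hcand : IsPath E v0 x (r ++ [x]) ∧ ∀ u ∈ (r ++ [x]).dropLast, u ∈ F := by
    refine ⟨⟨List.isChain_append.mpr ⟨hcr, List.isChain_singleton x, ?_⟩, ?_, List.getLast?_concat⟩, ?_⟩
    · intro a ha b hb
      rw [hlastr] at ha
      simp at ha hb
      rw [← ha, ← hb]
      exact hEvx
    · rw [List.head?_append]
      rcases hr' : r.head? with _ | a
      · rw [List.head?_eq_none_iff] at hr'; exact absurd hr' hrne
      · exact hr'.symm.trans hheadr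
    · rw [List.dropLast_concat]
      exact hrF
  calc Dfun E w v0 F x ≤ pathCost w (r ++ [x]) := iInf_le _ (⟨r ++ [x], hcand⟩ : {p : List V // IsPath E v0 x p ∧ ∀ v ∈ p.dropLast, v ∈ F})
    _ = pathCost w r + w v x := by rw [pathCost_concat w r hrne x, hglr]
    _ = cost E w v0 v + w v x := by rw [hrc]
    _ ≤ pathCost w q + w v x := by
        exact add_le_add_left (iInf_le _ (⟨q, hpathq⟩ : {p : List V // IsPath E v0 v p})) _
    _ = pathCost w p := by rw [hp_decomp, pathCost_concat w q hqne x]
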